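/- For any two complex numbers z₁, z₂ with |z₁| < ξ and |z₂| < ξ (where 0 < ξ ≤ 1), one has |(sin z₂ − z₂) − (sin z₁ − z₁)| ≤ (1/2)|z₂ − z₁|·ξ²·cosh ξ. -/

import Mathlib

open Complex Finset

/-- Quartic remainder bound for cosine: `|cos w - 1| ≤ |w|²/2 + 5|w|⁴/96` for `|w| ≤ 1`. -/
lemma cos_sub_one_bound {w : ℂ} (hw : ‖w‖ ≤ 1) :
    ‖Complex.cos w - 1‖ ≤ ‖w‖ ^ 2 / 2 + 5 * ‖w‖ ^ 4 / 96 := by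
  have hI3 : (Complex.I) ^ 3 = -Complex.I := by
    rw [pow_succ, Complex.I_sq]; ring
  have h1 : ‖Complex.exp (w * Complex.I) -
      ∑ m ∈ range 4, (w * Complex.I) ^ m / m.factorial‖ ≤
      ‖w * Complex.I‖ ^ 4 * ((4 + 1 : ℕ) * ((4 : ℕ).factorial * (4 : ℕ) : ℝ)⁻¹) :=
    Complex.exp_bound (by simpa using hw) (by norm_num)
  have h2 : ‖Complex.exp (-(w * Complex.I)) -
      ∑ m ∈ range 4, (-(w * Complex.I)) ^ m / m.factorial‖ ≤
      ‖-(w * Complex.I)‖ ^ 4 * ((4 + 1 : ℕ) * ((4 : ℕ).factorial * (4 : ℕ) : ℝ)⁻¹) :=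
    Complex.exp_bound (by simpa using hw) (by norm_num)
  have hsum1 : (∑ m ∈ range 4, (w * Complex.I) ^ m / m.factorial) =
      1 + w * Complex.I - w ^ 2 / 2 - w ^ 3 * Complex.I / 6 := by
    simp [Finset.sum_range_succ, Nat.factorial]
    ring_nf
    simp only [hI3, Complex.I_sq]
    ring
  have hsum2 : (∑ m ∈ range 4, (-(w * Complex.I)) ^ m / m.factorial) =
      1 - w * Complex.I - w ^ 2 / 2 + w ^ 3 * Complex.I / 6 := by
    simp [Finset.sum_range_succ, Nat.factorial]
    ring_nf
    simp only [hI3, Complex.I_sq]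
    ring
  rw [hsum1] at h1
  rw [hsum2] at h2
  rw [show ‖w * Complex.I‖ = ‖w‖ by simp] at h1
  rw [show ‖-(w * Complex.I)‖ = ‖w‖ by simp] at h2
  norm_num [Nat.factorial] at h1 h2
  set X := Complex.exp (w * Complex.I) - (1 + w * Complex.I - w ^ 2 / 2 - w ^ 3 * Complex.I / 6) with hX
  set Y := Complex.exp (-(w * Complex.I)) - (1 - w * Complex.I - w ^ 2 / 2 + w ^ 3 * Complex.I / 6) with hY
  have hcos : Complex.cos w - 1 = -(w ^ 2) / 2 + (X + Y) / 2 := by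
    rw [hX, hY, Complex.cos]
    ring
  have hXY : ‖X + Y‖ ≤ 5 * ‖w‖ ^ 4 / 48 := by
    calc ‖X + Y‖ ≤ ‖X‖ + ‖Y‖ := norm_add_le _ _
      _ ≤ 5 * ‖w‖ ^ 4 / 48 := by linarith
  rw [hcos]
  calc ‖-(w ^ 2) / 2 + (X + Y) / 2‖
      ≤ ‖-(w ^ 2) / 2‖ + ‖(X + Y) / 2‖ := norm_add_le _ _
    _ ≤ ‖w‖ ^ 2 / 2 + 5 * ‖w‖ ^ 4 / 96 := by
        rw [norm_div, norm_div]
        simp only [norm_neg, Complex.norm_pow, Complex.norm_two]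
        linarith

theorem stmt5 (ξ : ℝ) (h0 : 0 < ξ) (h1 : ξ ≤ 1) (z₁ z₂ : ℂ)
    (hz₁ : ‖z₁‖ < ξ) (hz₂ : ‖z₂‖ < ξ) :
    ‖(Complex.sin z₂ - z₂) - (Complex.sin z₁ - z₁)‖ ≤
      (1/2) * ‖z₂ - z₁‖ * ξ^2 * Real.cosh ξ := by
  set C : ℝ := 1/2 * ξ^2 * Real.cosh ξ with hC
  have hcosh : 1 + ξ^2 / 2 ≤ Real.cosh ξ := by
    have h := Real.cosh_two_mul (ξ/2)
    rw [show 2*(ξ/2) = ξ by ring] at h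
    have hs : ξ/2 ≤ Real.sinh (ξ/2) := Real.self_le_sinh_iff.2 (by linarith)
    nlinarith [Real.cosh_sq (ξ/2), sq_nonneg (Real.sinh (ξ/2) - ξ/2), h0]
  have key : ∀ z ∈ Metric.closedBall (0:ℂ) ξ,
      ‖Complex.cos z - 1‖ ≤ C := by
    intro z hz
    rw [Metric.mem_closedBall, dist_zero_right] at hz
    have hzξ : ‖z‖ ≤ ξ := hz
    have hz1 : ‖z‖ ≤ 1 := hzξ.trans h1
    have hb := cos_sub_one_bound hz1
    have h4 : ‖z‖ ^ 4 ≤ ξ ^ 4 := pow_le_pow_left₀ (norm_nonneg z) hzξ 4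
    have h2 : ‖z‖ ^ 2 ≤ ξ ^ 2 := pow_le_pow_left₀ (norm_nonneg z) hzξ 2
    have : ‖Complex.cos z - 1‖ ≤ ξ^2/2 + 5*ξ^4/96 := by linarith
    calc ‖Complex.cos z - 1‖ ≤ ξ^2/2 + 5*ξ^4/96 := this
      _ ≤ 1/2 * ξ^2 * (1 + ξ^2/2) := by nlinarith [sq_nonneg ξ, sq_nonneg (ξ^2)]
      _ ≤ C := by rw [hC]; nlinarith [hcosh, sq_nonneg ξ]
  have hderiv : ∀ z ∈ Metric.closedBall (0:ℂ) ξ,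
      HasFDerivWithinAt (fun w => Complex.sin w - w)
        (ContinuousLinearMap.smulRight (1 : ℂ →L[ℂ] ℂ) (Complex.cos z - 1))
        (Metric.closedBall (0:ℂ) ξ) z := by
    intro z _
    have hd : HasDerivAt (fun w => Complex.sin w - w) (Complex.cos z - 1) z :=
      (Complex.hasDerivAt_sin z).sub (hasDerivAt_id z)
    exact (hasDerivAt_iff_hasFDerivAt.1 hd).hasFDerivWithinAt
  have hbound : ∀ z ∈ Metric.closedBall (0:ℂ) ξ,
      ‖ContinuousLinearMap.smulRight (1 : ℂ →L[ℂ] ℂ) (Complex.cos z - 1)‖ ≤ C := by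
    intro z hz
    rw [ContinuousLinearMap.norm_smulRight_apply]
    simp only [norm_one, one_mul]
    exact key z hz
  have hconv : Convex ℝ (Metric.closedBall (0:ℂ) ξ) := convex_closedBall _ _
  have hmem₁ : z₁ ∈ Metric.closedBall (0:ℂ) ξ := by
    rw [Metric.mem_closedBall, dist_zero_right]; exact le_of_lt hz₁
  have hmem₂ : z₂ ∈ Metric.closedBall (0:ℂ) ξ := by
    rw [Metric.mem_closedBall, dist_zero_right]; exact le_of_lt hz₂
  have hmvt := hconv.norm_image_sub_le_of_norm_hasFDerivWithin_le hderiv hbound hmem₁ hmem₂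
  calc ‖(Complex.sin z₂ - z₂) - (Complex.sin z₁ - z₁)‖ ≤ C * ‖z₂ - z₁‖ := hmvt
    _ = (1/2) * ‖z₂ - z₁‖ * ξ^2 * Real.cosh ξ := by
      rw [hC]; ring
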